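/- Let Y and Z be identically distributed square-integrable real random variables. Then Var(2Z - Y) ≥ Var(Y), with equality if and only if Y = Z almost surely. -/

import Mathlib

open MeasureTheory ProbabilityTheory

lemma integrable_mul_of_memL2 {Ω : Type*} [MeasurableSpace Ω] {P : Measure Ω}
    {f g : Ω → ℝ} (hf : MemLp f 2 P) (hg : MemLp g 2 P) :
    Integrable (fun ω => f ω * g ω) P := by
  have h : MemLp (f • g) 1 P := hg.smul hf
  have := memLp_one_iff_integrable.mp h
  exact this

/-- `Var(2Z - Y) ≥ Var(Y)` for identically distributed square-integrable `Y, Z`,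
with equality iff `Y = Z` a.s. -/
theorem stmt_7 {Ω : Type*} [MeasurableSpace Ω] (P : Measure Ω) [IsProbabilityMeasure P]
    (Y Z : Ω → ℝ) (hY : Measurable Y) (hZ : Measurable Z)
    (hY2 : MemLp Y 2 P) (hZ2 : MemLp Z 2 P)
    (hid : IdentDistrib Y Z P P) :
    variance Y P ≤ variance (fun ω => 2 * Z ω - Y ω) P
    ∧ (variance (fun ω => 2 * Z ω - Y ω) P = variance Y P ↔ Y =ᵐ[P] Z) := by
  have hW2 : MemLp (fun ω => 2 * Z ω - Y ω) 2 P := (hZ2.const_mul 2).sub hY2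
  have iY : Integrable Y P := hY2.integrable one_le_two
  have iZ : Integrable Z P := hZ2.integrable one_le_two
  have iY2 : Integrable (fun ω => Y ω ^ 2) P := by
    simpa [sq] using integrable_mul_of_memL2 hY2 hY2
  have iZ2 : Integrable (fun ω => Z ω ^ 2) P := by
    simpa [sq] using integrable_mul_of_memL2 hZ2 hZ2
  have iYZ : Integrable (fun ω => Y ω * Z ω) P := integrable_mul_of_memL2 hY2 hZ2
  -- identically distributed facts
  have hEZ : ∫ ω, Z ω ∂P = ∫ ω, Y ω ∂P := (hid.integral_eq).symm
  have hEZ2 : ∫ ω, Z ω ^ 2 ∂P = ∫ ω, Y ω ^ 2 ∂P :=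
    ((hid.comp (measurable_id.pow_const 2)).integral_eq).symm
  have i4Z2 : Integrable (fun ω => 4 * Z ω ^ 2) P := iZ2.const_mul 4
  have i4YZ : Integrable (fun ω => 4 * (Y ω * Z ω)) P := iYZ.const_mul 4
  have i2YZ : Integrable (fun ω => 2 * (Y ω * Z ω)) P := iYZ.const_mul 2
  have iA : Integrable (fun ω => 4 * Z ω ^ 2 - 4 * (Y ω * Z ω)) P := i4Z2.sub i4YZ
  have iB : Integrable (fun ω => Y ω ^ 2 - 2 * (Y ω * Z ω)) P := iY2.sub i2YZ
  -- compute the mean of 2Z - Y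
  have e1 : ∫ ω, (2 * Z ω - Y ω) ∂P = ∫ ω, Y ω ∂P := by
    rw [integral_sub (iZ.const_mul 2) iY, integral_const_mul, hEZ]; ring
  -- compute the second moment of 2Z - Y
  have e2 : ∫ ω, (2 * Z ω - Y ω) ^ 2 ∂P
      = 5 * ∫ ω, Y ω ^ 2 ∂P - 4 * ∫ ω, Y ω * Z ω ∂P := by
    have h : (fun ω => (2 * Z ω - Y ω) ^ 2)
        = fun ω => 4 * Z ω ^ 2 - 4 * (Y ω * Z ω) + Y ω ^ 2 := by
      funext ω; ring
    rw [h, integral_add iA iY2, integral_sub i4Z2 i4YZ, integral_const_mul,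
      integral_const_mul, hEZ2]
    ring
  have e3 : ∫ ω, (Y ω - Z ω) ^ 2 ∂P
      = 2 * ∫ ω, Y ω ^ 2 ∂P - 2 * ∫ ω, Y ω * Z ω ∂P := by
    have h : (fun ω => (Y ω - Z ω) ^ 2)
        = fun ω => Y ω ^ 2 - 2 * (Y ω * Z ω) + Z ω ^ 2 := by
      funext ω; ring
    rw [h, integral_add iB iZ2, integral_sub iY2 i2YZ, integral_const_mul, hEZ2]
    ring
  -- the key identity
  have key : variance (fun ω => 2 * Z ω - Y ω) P
      = variance Y P + 2 * ∫ ω, (Y ω - Z ω) ^ 2 ∂P := by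
    rw [variance_eq_sub hW2, variance_eq_sub hY2]
    simp only [Pi.pow_apply]
    rw [e1, e2, e3]
    ring
  have hnn : 0 ≤ ∫ ω, (Y ω - Z ω) ^ 2 ∂P :=
    integral_nonneg fun ω => sq_nonneg _
  have iS : Integrable (fun ω => (Y ω - Z ω) ^ 2) P := by
    have := integrable_mul_of_memL2 (hY2.sub hZ2) (hY2.sub hZ2)
    simpa [sq, Pi.sub_apply] using this
  constructor
  · rw [key]; linarith
  · rw [key]
    constructor
    · intro h
      have h0 : ∫ ω, (Y ω - Z ω) ^ 2 ∂P = 0 := by linarith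
      have := (integral_eq_zero_iff_of_nonneg (fun ω => sq_nonneg (Y ω - Z ω)) iS).mp h0
      filter_upwards [this] with ω hω
      have h1 : (Y ω - Z ω) ^ 2 = 0 := hω
      have h2 : Y ω - Z ω = 0 := by
        exact (pow_eq_zero_iff (two_ne_zero)).mp h1
      linarith
    · intro h
      have h0 : ∫ ω, (Y ω - Z ω) ^ 2 ∂P = 0 := by
        rw [integral_eq_zero_iff_of_nonneg (fun ω => sq_nonneg (Y ω - Z ω)) iS]
        filter_upwards [h] with ω hω
        simp [hω]
      rw [h0]; ring
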